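/- Let R : Z_3^3 → S_5 satisfy: 1 ∈ {R(x)_1,R(x)_2,R(x)_3}, R(x)_5 ≠ 5, and d_H(R(x)_{\{4,5}}, R(y)_{\{4,5}}) ≥ d_H(x,y) for distinct x,y. Let S : Z_3^3 → S_5 satisfy: 2 ∈ {S(x)_1,S(x)_2,S(x)_3}, S(x)_5 ≠ 1, and d_H(S(x)_{\{4,5}}, S(y)_{\{4,5}}) ≥ d_H(x,y) for distinct x,y. Define U : Z_3^6 → S_8 by the paper's construction (set φ = R(x_1,x_2,x_3), γ = S(x_4,x_5,x_6)+(3,3,3,3,3); define ρ_i = γ_5 if 1≤i≤4 and φ_i=5, ρ_i = φ_i if 1≤i≤4 and φ_i≠5, ρ_i = φ_5 if 5≤i≤8 and γ_{i−4}=4, ρ_i = γ_{i−4} if 5≤i≤8 and γ_{i−4}≠4; then swap values 1↔7 and 5↔8 in ρ to get U(x)). Then for every x ∈ Z_3^6, U(x) is a permutation of {1,...,8}, 7 ∈ {U(x)_1,U(x)_2,U(x)_3}, 8 ∈ {U(x)_5,U(x)_6,U(x)_7}, and for distinct x,y ∈ Z_3^6, d_H(U(x)_{\{4,8}}, U(y)_{\{4,8}})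 ≥ d_H(x,y). -/
import Mathlib

/-- The left half of a length-6 ternary vector. -/
def xL (x : Fin 6 → Fin 3) : Fin 3 → Fin 3 := fun j => x ⟨j.val, by omega⟩

/-- The right half of a length-6 ternary vector. -/
def xR (x : Fin 6 → Fin 3) : Fin 3 → Fin 3 := fun j => x ⟨j.val + 3, by omega⟩

/-- φ = R(x₁,x₂,x₃), as a tuple with values in {1,…,5}. -/
def phi (R : (Fin 3 → Fin 3) → Equiv.Perm (Fin 5)) (x : Fin 6 → Fin 3) (i : Fin 5) : ℕ :=
  ((R (xL x) i : Fin 5) : ℕ) + 1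

/-- γ = S(x₄,x₅,x₆) + (3,3,3,3,3), as a tuple with values in {4,…,8}. -/
def gam (S : (Fin 3 → Fin 3) → Equiv.Perm (Fin 5)) (x : Fin 6 → Fin 3) (i : Fin 5) : ℕ :=
  ((S (xR x) i : Fin 5) : ℕ) + 1 + 3

/-- The intermediate tuple ρ of the paper's construction of U. -/
def rho (R S : (Fin 3 → Fin 3) → Equiv.Perm (Fin 5)) (x : Fin 6 → Fin 3) (i : Fin 8) : ℕ :=
  if h : i.val < 4 then
    (if phi R x ⟨i.val, by omega⟩ = 5 then gam S x 4 else phi R x ⟨i.val, by omega⟩)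
  else
    (if gam S x ⟨i.val - 4, by omega⟩ = 4 then phi R x 4 else gam S x ⟨i.val - 4, by omega⟩)

/-- Swapping the values 1 ↔ 7 and 5 ↔ 8. -/
def sw (v : ℕ) : ℕ :=
  if v = 1 then 7 else if v = 7 then 1 else if v = 5 then 8 else if v = 8 then 5 else v

/-- The map U of the paper, with values in {1,…,8}. -/
def Umap (R S : (Fin 3 → Fin 3) → Equiv.Perm (Fin 5)) (x : Fin 6 → Fin 3) (i : Fin 8) : ℕ :=
  sw (rho R S x i)

lemma sw_sw (v : ℕ) : sw (sw v) = v := by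
  unfold sw; split_ifs <;> omega

lemma sw_inj : Function.Injective sw := by
  intro a b h
  rw [← sw_sw a, h, sw_sw]

lemma phi_bound (R : (Fin 3 → Fin 3) → Equiv.Perm (Fin 5)) (x : Fin 6 → Fin 3) (i : Fin 5) :
    1 ≤ phi R x i ∧ phi R x i ≤ 5 := by
  unfold phi; have := (R (xL x) i).isLt; omega

lemma gam_bound (S : (Fin 3 → Fin 3) → Equiv.Perm (Fin 5)) (x : Fin 6 → Fin 3) (i : Fin 5) :
    4 ≤ gam S x i ∧ gam S x i ≤ 8 := by
  unfold gam; have := (S (xR x) i).isLt; omega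

lemma phi_inj {R : (Fin 3 → Fin 3) → Equiv.Perm (Fin 5)} {x : Fin 6 → Fin 3} {a b : Fin 5}
    (h : phi R x a = phi R x b) : a = b := by
  unfold phi at h
  exact (R (xL x)).injective (Fin.ext (by omega))

lemma gam_inj {S : (Fin 3 → Fin 3) → Equiv.Perm (Fin 5)} {x : Fin 6 → Fin 3} {a b : Fin 5}
    (h : gam S x a = gam S x b) : a = b := by
  unfold gam at h
  exact (S (xR x)).injective (Fin.ext (by omega))

lemma rho_inj (R S : (Fin 3 → Fin 3) → Equiv.Perm (Fin 5)) (x : Fin 6 → Fin 3)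
    (h4 : phi R x 4 ≤ 4) (h5 : 5 ≤ gam S x 4) :
    Function.Injective (rho R S x) := by
  have key : ∀ a b : Fin 5, phi R x a = phi R x b → a.val = b.val :=
    fun a b h => congrArg Fin.val (phi_inj h)
  have keyg : ∀ a b : Fin 5, gam S x a = gam S x b → a.val = b.val :=
    fun a b h => congrArg Fin.val (gam_inj h)
  intro i j hij
  unfold rho at hij
  by_cases hi : i.val < 4 <;> by_cases hj : j.val < 4
  · rw [dif_pos hi, dif_pos hj] at hij
    split_ifs at hij with hpi hpj hpj
    · have := key _ _ (hpi.trans hpj.symm); exact Fin.ext this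
    · have := phi_bound R x ⟨j.val, by omega⟩; omega
    · have := phi_bound R x ⟨i.val, by omega⟩; omega
    · have := key _ _ hij; exact Fin.ext this
  · exfalso
    rw [dif_pos hi, dif_neg hj] at hij
    split_ifs at hij with hpi hgj hgj
    · omega
    · have := keyg _ _ hij; simp at this; omega
    · have := key _ _ hij; simp at this; omega
    · have h1 := phi_bound R x ⟨i.val, by omega⟩
      have h2 := gam_bound S x ⟨j.val - 4, by omega⟩
      omega
  · exfalso
    rw [dif_neg hi, dif_pos hj] at hij
    split_ifs at hij with hgi hpj hpj
    · omega
    · have := key _ _ hij; simp at this; omega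
    · have := keyg _ _ hij; simp at this; omega
    · have h1 := phi_bound R x ⟨j.val, by omega⟩
      have h2 := gam_bound S x ⟨i.val - 4, by omega⟩
      omega
  · rw [dif_neg hi, dif_neg hj] at hij
    split_ifs at hij with hgi hgj hgj
    · have := keyg _ _ (hgi.trans hgj.symm); simp at this; exact Fin.ext (by omega)
    · have := gam_bound S x ⟨j.val - 4, by omega⟩; omega
    · have := gam_bound S x ⟨i.val - 4, by omega⟩; omega
    · have := keyg _ _ hij; simp at this; exact Fin.ext (by omega)

lemma rho_bound (R S : (Fin 3 → Fin 3) → Equiv.Perm (Fin 5)) (x : Fin 6 → Fin 3) (i : Fin 8) :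
    1 ≤ rho R S x i ∧ rho R S x i ≤ 8 := by
  unfold rho
  split_ifs with h h1 h1
  · exact ⟨by have := gam_bound S x 4; omega, (gam_bound S x 4).2⟩
  · have := phi_bound R x ⟨i.val, by omega⟩; omega
  · have := phi_bound R x 4; omega
  · have := gam_bound S x ⟨i.val - 4, by omega⟩; omega

lemma sw_bound {v : ℕ} (h1 : 1 ≤ v) (h8 : v ≤ 8) : 1 ≤ sw v ∧ sw v ≤ 8 := by
  unfold sw; split_ifs <;> omega

lemma ham_split (x y : Fin 6 → Fin 3) :
    hammingDist x y = hammingDist (xL x) (xL y) + hammingDist (xR x) (xR y) := by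
  simp only [hammingDist, Finset.card_filter]
  rw [Fin.sum_univ_six, Fin.sum_univ_three, Fin.sum_univ_three]
  simp only [xL, xR]
  norm_num
  simp only [show ((⟨2, by norm_num⟩ : Fin 6)) = 2 from rfl,
    show ((⟨3, by norm_num⟩ : Fin 6)) = 3 from rfl,
    show ((⟨4, by norm_num⟩ : Fin 6)) = 4 from rfl,
    show ((⟨5, by norm_num⟩ : Fin 6)) = 5 from rfl]
  ring

-- coordinate disagreement lemmas
lemma U_ne_left (R S : (Fin 3 → Fin 3) → Equiv.Perm (Fin 5)) (x y : Fin 6 → Fin 3)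
    (h5x : 5 ≤ gam S x 4) (h5y : 5 ≤ gam S y 4)
    {i : Fin 5} (hi : i.val < 3) (hne : R (xL x) i ≠ R (xL y) i) (h8 : i.val < 8) :
    Umap R S x ⟨i.val, h8⟩ ≠ Umap R S y ⟨i.val, h8⟩ := by
  intro h
  have hr : rho R S x ⟨i.val, h8⟩ = rho R S y ⟨i.val, h8⟩ := sw_inj h
  have hx : rho R S x ⟨i.val, h8⟩ = if phi R x i = 5 then gam S x 4 else phi R x i := by
    unfold rho
    rw [dif_pos (show ((⟨i.val, h8⟩ : Fin 8)).val < 4 from by simp; omega)]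
  have hy : rho R S y ⟨i.val, h8⟩ = if phi R y i = 5 then gam S y 4 else phi R y i := by
    unfold rho
    rw [dif_pos (show ((⟨i.val, h8⟩ : Fin 8)).val < 4 from by simp; omega)]
  rw [hx, hy] at hr
  have hbx := phi_bound R x i
  have hby := phi_bound R y i
  have hne' : phi R x i ≠ phi R y i := by
    intro hp
    exact hne (Fin.ext (by unfold phi at hp; omega))
  split_ifs at hr <;> omega

lemma U_ne_right (R S : (Fin 3 → Fin 3) → Equiv.Perm (Fin 5)) (x y : Fin 6 → Fin 3)
    (h4x : phi R x 4 ≤ 4) (h4y : phi R y 4 ≤ 4)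
    {i : Fin 5} (hne : S (xR x) i ≠ S (xR y) i) (h8 : i.val + 4 < 8) :
    Umap R S x ⟨i.val + 4, h8⟩ ≠ Umap R S y ⟨i.val + 4, h8⟩ := by
  intro h
  have hr : rho R S x ⟨i.val + 4, h8⟩ = rho R S y ⟨i.val + 4, h8⟩ := sw_inj h
  have hidx : (⟨(⟨i.val + 4, h8⟩ : Fin 8).val - 4, by simp⟩ : Fin 5) = i := by
    apply Fin.ext; simp
  have hx : rho R S x ⟨i.val + 4, h8⟩ = if gam S x i = 4 then phi R x 4 else gam S x i := by
    unfold rho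
    rw [dif_neg (show ¬((⟨i.val + 4, h8⟩ : Fin 8)).val < 4 from by simp)]
    rw [hidx]
  have hy : rho R S y ⟨i.val + 4, h8⟩ = if gam S y i = 4 then phi R y 4 else gam S y i := by
    unfold rho
    rw [dif_neg (show ¬((⟨i.val + 4, h8⟩ : Fin 8)).val < 4 from by simp)]
    rw [hidx]
  rw [hx, hy] at hr
  have hbx := gam_bound S x i
  have hby := gam_bound S y i
  have hne' : gam S x i ≠ gam S y i := by
    intro hp
    exact hne (Fin.ext (by unfold gam at hp; omega))
  split_ifs at hr <;> omega

theorem stmt_11 (R S : (Fin 3 → Fin 3) → Equiv.Perm (Fin 5))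
    (hR1 : ∀ x, ∃ i : Fin 5, (i : ℕ) < 3 ∧ ((R x i : Fin 5) : ℕ) + 1 = 1)
    (hR2 : ∀ x, ((R x 4 : Fin 5) : ℕ) + 1 ≠ 5)
    (hR3 : ∀ x y : Fin 3 → Fin 3, x ≠ y →
      hammingDist x y ≤
        (Finset.univ.filter fun i : Fin 5 => (i : ℕ) < 3 ∧ R x i ≠ R y i).card)
    (hS1 : ∀ x, ∃ i : Fin 5, (i : ℕ) < 3 ∧ ((S x i : Fin 5) : ℕ) + 1 = 2)
    (hS2 : ∀ x, ((S x 4 : Fin 5) : ℕ) + 1 ≠ 1)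
    (hS3 : ∀ x y : Fin 3 → Fin 3, x ≠ y →
      hammingDist x y ≤
        (Finset.univ.filter fun i : Fin 5 => (i : ℕ) < 3 ∧ S x i ≠ S y i).card) :
    (∀ x : Fin 6 → Fin 3,
        (Function.Injective (Umap R S x) ∧ ∀ i, Umap R S x i ∈ Finset.Icc 1 8) ∧
        (∃ i : Fin 8, (i : ℕ) < 3 ∧ Umap R S x i = 7) ∧
        (∃ i : Fin 8, 4 ≤ (i : ℕ) ∧ (i : ℕ) < 7 ∧ Umap R S x i = 8)) ∧
      ∀ x y : Fin 6 → Fin 3, x ≠ y →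
        hammingDist x y ≤
          (Finset.univ.filter fun i : Fin 8 =>
            (i : ℕ) ≠ 3 ∧ (i : ℕ) ≠ 7 ∧ Umap R S x i ≠ Umap R S y i).card := by
  have hphi4 : ∀ x, phi R x 4 ≤ 4 := by
    intro x
    have h := hR2 (xL x)
    have := (R (xL x) 4).isLt
    unfold phi; omega
  have hgam4 : ∀ x, 5 ≤ gam S x 4 := by
    intro x
    have h := hS2 (xR x)
    unfold gam; omega
  constructor
  · intro x
    refine ⟨⟨fun a b h => rho_inj R S x (hphi4 x) (hgam4 x) (sw_inj h), ?_⟩, ?_, ?_⟩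
    · intro i
      have h := rho_bound R S x i
      rw [Finset.mem_Icc]
      exact sw_bound h.1 h.2
    · obtain ⟨i, hi3, hval⟩ := hR1 (xL x)
      have hphi : phi R x i = 1 := hval
      refine ⟨⟨i.val, by omega⟩, by simpa using hi3, ?_⟩
      have hx1 : rho R S x ⟨i.val, by omega⟩ = if phi R x i = 5 then gam S x 4 else phi R x i := by
        unfold rho
        rw [dif_pos (show ((⟨i.val, by omega⟩ : Fin 8)).val < 4 from by simp; omega)]
      show sw (rho R S x _) = 7
      rw [hx1, hphi, if_neg (by omega)]
      decide
    · obtain ⟨i, hi3, hval⟩ := hS1 (xR x)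
      have hgam : gam S x i = 5 := by unfold gam; omega
      refine ⟨⟨i.val + 4, by omega⟩, by simp, by simp; omega, ?_⟩
      have hidx : (⟨(⟨i.val + 4, by omega⟩ : Fin 8).val - 4, by simp⟩ : Fin 5) = i := by
        apply Fin.ext; simp
      have hx1 : rho R S x ⟨i.val + 4, by omega⟩ = if gam S x i = 4 then phi R x 4 else gam S x i := by
        unfold rho
        rw [dif_neg (show ¬((⟨i.val + 4, by omega⟩ : Fin 8)).val < 4 from by simp)]
        rw [hidx]
      show sw (rho R S x _) = 8
      rw [hx1, hgam, if_neg (by omega)]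
      decide
  · intro x y hxy
    set F := (Finset.univ.filter fun i : Fin 8 =>
      (i : ℕ) ≠ 3 ∧ (i : ℕ) ≠ 7 ∧ Umap R S x i ≠ Umap R S y i) with hF
    set A := (Finset.univ.filter fun i : Fin 5 =>
      (i : ℕ) < 3 ∧ R (xL x) i ≠ R (xL y) i) with hA
    set B := (Finset.univ.filter fun i : Fin 5 =>
      (i : ℕ) < 3 ∧ S (xR x) i ≠ S (xR y) i) with hB
    have hLA : hammingDist (xL x) (xL y) ≤ A.card := by
      by_cases h : xL x = xL y
      · simp [h]
      · exact hR3 _ _ h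
    have hRB : hammingDist (xR x) (xR y) ≤ B.card := by
      by_cases h : xR x = xR y
      · simp [h]
      · exact hS3 _ _ h
    -- images
    have fA_injOn : Set.InjOn (fun i : Fin 5 => (⟨i.val, by omega⟩ : Fin 8)) A := by
      intro a _ b _ h
      simp only [Fin.mk.injEq] at h
      exact Fin.ext h
    have fB_injOn : Set.InjOn (fun i : Fin 5 => (⟨(i.val + 4) % 8, Nat.mod_lt _ (by omega)⟩ : Fin 8)) B := by
      intro a ha b hb h
      simp only [hB, Finset.mem_coe, Finset.mem_filter] at ha hb
      have := congrArg Fin.val h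
      simp only at this
      rw [Nat.mod_eq_of_lt (by omega), Nat.mod_eq_of_lt (by omega)] at this
      exact Fin.ext (by omega)
    have hAF : A.image (fun i : Fin 5 => (⟨i.val, by omega⟩ : Fin 8)) ⊆ F := by
      intro j hj
      simp only [Finset.mem_image] at hj
      obtain ⟨i, hiA, rfl⟩ := hj
      simp only [hA, Finset.mem_filter] at hiA
      simp only [hF, Finset.mem_filter]
      refine ⟨Finset.mem_univ _, show (i : ℕ) ≠ 3 by omega, show (i : ℕ) ≠ 7 by omega, ?_⟩
      exact U_ne_left R S x y (hgam4 x) (hgam4 y) hiA.2.1 hiA.2.2 (by omega)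
    have hBF : B.image (fun i : Fin 5 => (⟨(i.val + 4) % 8, Nat.mod_lt _ (by omega)⟩ : Fin 8)) ⊆ F := by
      intro j hj
      simp only [Finset.mem_image] at hj
      obtain ⟨i, hiB, rfl⟩ := hj
      simp only [hB, Finset.mem_filter] at hiB
      have hmod : (i.val + 4) % 8 = i.val + 4 := Nat.mod_eq_of_lt (by omega)
      simp only [hF, Finset.mem_filter]
      refine ⟨Finset.mem_univ _, show ((i : ℕ) + 4) % 8 ≠ 3 by omega,
        show ((i : ℕ) + 4) % 8 ≠ 7 by omega, ?_⟩
      have h := U_ne_right R S x y (hphi4 x) (hphi4 y) hiB.2.2 (by omega)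
      have heq : (⟨(i.val + 4) % 8, Nat.mod_lt _ (by omega)⟩ : Fin 8) = ⟨i.val + 4, by omega⟩ :=
        Fin.ext hmod
      rw [heq]; exact h
    have hdisj : Disjoint (A.image (fun i : Fin 5 => (⟨i.val, by omega⟩ : Fin 8)))
        (B.image (fun i : Fin 5 => (⟨(i.val + 4) % 8, Nat.mod_lt _ (by omega)⟩ : Fin 8))) := by
      rw [Finset.disjoint_left]
      intro j hj1 hj2
      simp only [Finset.mem_image] at hj1 hj2
      obtain ⟨a, haA, rfl⟩ := hj1
      obtain ⟨b, hbB, hb⟩ := hj2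
      simp only [hA, Finset.mem_filter] at haA
      simp only [hB, Finset.mem_filter] at hbB
      have := congrArg Fin.val hb
      simp only at this
      rw [Nat.mod_eq_of_lt (by omega)] at this
      omega
    calc hammingDist x y = hammingDist (xL x) (xL y) + hammingDist (xR x) (xR y) :=
          ham_split x y
      _ ≤ A.card + B.card := Nat.add_le_add hLA hRB
      _ = (A.image _).card + (B.image _).card := by
          rw [Finset.card_image_of_injOn fA_injOn, Finset.card_image_of_injOn fB_injOn]
      _ = ((A.image _) ∪ (B.image _)).card := (Finset.card_union_of_disjoint hdisj).symm
      _ ≤ F.card := Finset.card_le_card (Finset.union_subset hAF hBF)
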